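/- arXiv:2005.05552 — 8 statements merged into one kernel-verified Lean document; each statement's English description precedes it below -/
import Mathlib

section
/- For every shape factor c > 0 and every σ > 0, the generalized Gaussian density integrates to one: ∫_{ℝ} A·exp(−|β·x|^c) dx = 1. -/
open Real MeasureTheory

/-- Scale parameter β of the generalized Gaussian density. -/
noncomputable def ggdBeta (c σ : ℝ) : ℝ :=
  (1 / σ) * Real.sqrt (Real.Gamma (3 / c) / Real.Gamma (1 / c))

/-- Normalizing constant A of the generalized Gaussian density. -/
noncomputable def ggdA (c σ : ℝ) : ℝ :=
  ggdBeta c σ * c / (2 * Real.Gamma (1 / c))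

/-- The generalized Gaussian density with shape factor `c` and scale `σ`. -/
noncomputable def ggdPdf (c σ : ℝ) (x : ℝ) : ℝ :=
  ggdA c σ * Real.exp (-|ggdBeta c σ * x| ^ c)

/-- The generalized Gaussian density integrates to one. -/
theorem ggdPdf_integral_eq_one (c σ : ℝ) (hc : 0 < c) (hσ : 0 < σ) :
    ∫ x : ℝ, ggdPdf c σ x = 1 := by
  set β := ggdBeta c σ with hβdef
  have hΓ1 : 0 < Real.Gamma (1 / c) := Real.Gamma_pos_of_pos (by positivity)
  have hΓ3 : 0 < Real.Gamma (3 / c) := Real.Gamma_pos_of_pos (by positivity)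
  have hβ : 0 < β := by
    rw [hβdef, ggdBeta]
    positivity
  have h1 : ∀ x : ℝ, ggdPdf c σ x = ggdA c σ * Real.exp (-|β * x| ^ c) := fun x => rfl
  simp_rw [h1]
  rw [integral_const_mul]
  have h2 : (∫ x : ℝ, Real.exp (-|β * x| ^ c))
      = β⁻¹ * ∫ x : ℝ, Real.exp (-|x| ^ c) := by
    have := MeasureTheory.Measure.integral_comp_mul_left
      (fun x : ℝ => Real.exp (-|x| ^ c)) β
    simp only [smul_eq_mul] at this
    rw [this, abs_of_pos (inv_pos.mpr hβ)]
  rw [h2, integral_comp_abs (f := fun x => Real.exp (-x ^ c)),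
    integral_exp_neg_rpow hc, Real.Gamma_add_one (one_div_ne_zero hc.ne')]
  rw [ggdA]
  field_simp
  rfl
end

section
/- Fix σ > 0. As the shape factor c tends to +∞, the generalized Gaussian density converges pointwise to the uniform density of variance σ²: for every x ∈ ℝ with |x| < √3·σ one has lim_{c→+∞} P_{c,σ}(x) = 1/(2·√3·σ), and for every x with |x| > √3·σ one has lim_{c→+∞} P_{c,σ}(x) = 0. -/
open Real MeasureTheory

open Filter

private lemma aux_div_tendsto (a : ℝ) : Filter.Tendsto (fun c : ℝ => a / c) Filter.atTop (nhds 0) :=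
  tendsto_const_nhds.div_atTop tendsto_id

private lemma aux_gamma_tendsto (a : ℝ) :
    Filter.Tendsto (fun c : ℝ => Real.Gamma (a / c + 1)) Filter.atTop (nhds 1) := by
  have hcont : ContinuousAt Real.Gamma 1 := by
    refine (Real.differentiableAt_Gamma fun m => ?_).continuousAt
    have hm : (0:ℝ) ≤ (m:ℝ) := Nat.cast_nonneg m
    intro h
    linarith
  have h1 : Filter.Tendsto (fun c : ℝ => a / c + 1) Filter.atTop (nhds 1) := by
    simpa using (aux_div_tendsto a).add (tendsto_const_nhds (x := (1:ℝ)))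
  simpa [Real.Gamma_one, Function.comp_def] using hcont.tendsto.comp h1

/-- β converges to 1/(√3 σ). -/
private lemma aux_beta_tendsto (σ : ℝ) (hσ : 0 < σ) :
    Filter.Tendsto (fun c : ℝ => ggdBeta c σ) Filter.atTop (nhds (1 / (Real.sqrt 3 * σ))) := by
  have hratio : Filter.Tendsto (fun c : ℝ => Real.Gamma (3 / c) / Real.Gamma (1 / c)) Filter.atTop
      (nhds (1 / 3)) := by
    have h3 := aux_gamma_tendsto 3
    have h1 := aux_gamma_tendsto 1
    have hmain : Filter.Tendsto
        (fun c : ℝ => Real.Gamma (3 / c + 1) / (3 * Real.Gamma (1 / c + 1)))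
        Filter.atTop (nhds (1 / 3)) := by
      have := h3.div ((tendsto_const_nhds (x := (3:ℝ))).mul h1) (by norm_num)
      simpa [Pi.div_def] using this
    refine hmain.congr' ?_
    filter_upwards [Filter.eventually_gt_atTop (0 : ℝ)] with c hc
    have hc3 : (3 / c : ℝ) ≠ 0 := by positivity
    have hc1 : (1 / c : ℝ) ≠ 0 := by positivity
    rw [Real.Gamma_add_one hc3, Real.Gamma_add_one hc1]
    field_simp
  have hsqrt : Filter.Tendsto (fun c : ℝ => Real.sqrt (Real.Gamma (3 / c) / Real.Gamma (1 / c)))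
      Filter.atTop (nhds (Real.sqrt (1 / 3))) :=
    (Real.continuous_sqrt.continuousAt).tendsto.comp hratio
  have hmul := (tendsto_const_nhds (x := (1 / σ : ℝ)) (f := Filter.atTop)).mul hsqrt
  have heq : (1 / σ) * Real.sqrt (1 / 3) = 1 / (Real.sqrt 3 * σ) := by
    have h3 : Real.sqrt 3 ≠ 0 := by positivity
    rw [show ((1:ℝ)/3) = 3⁻¹ by norm_num, Real.sqrt_inv]
    field_simp
  rw [← heq]
  exact hmul

/-- A converges to 1/(2 √3 σ). -/
private lemma aux_A_tendsto (σ : ℝ) (hσ : 0 < σ) :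
    Filter.Tendsto (fun c : ℝ => ggdA c σ) Filter.atTop (nhds (1 / (2 * Real.sqrt 3 * σ))) := by
  have h1 := aux_gamma_tendsto 1
  have hβ := aux_beta_tendsto σ hσ
  have hmain : Filter.Tendsto (fun c : ℝ => ggdBeta c σ / (2 * Real.Gamma (1 / c + 1)))
      Filter.atTop (nhds (1 / (Real.sqrt 3 * σ) / 2)) := by
    have := hβ.div ((tendsto_const_nhds (x := (2:ℝ))).mul h1) (by norm_num)
    simpa [Pi.div_def] using this
  have heq : 1 / (Real.sqrt 3 * σ) / 2 = 1 / (2 * Real.sqrt 3 * σ) := by ring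
  rw [heq] at hmain
  refine hmain.congr' ?_
  filter_upwards [Filter.eventually_gt_atTop (0 : ℝ)] with c hc
  have hc1 : (1 / c : ℝ) ≠ 0 := by positivity
  rw [ggdA, Real.Gamma_add_one hc1]
  field_simp

/-- |β x| converges to |x|/(√3 σ). -/
private lemma aux_absbx_tendsto (σ : ℝ) (hσ : 0 < σ) (x : ℝ) :
    Filter.Tendsto (fun c : ℝ => |ggdBeta c σ * x|) Filter.atTop
      (nhds (|x| / (Real.sqrt 3 * σ))) := by
  have h := ((aux_beta_tendsto σ hσ).mul (tendsto_const_nhds (x := x))).abs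
  have h3 : (0:ℝ) < Real.sqrt 3 * σ := by positivity
  have heq : |1 / (Real.sqrt 3 * σ) * x| = |x| / (Real.sqrt 3 * σ) := by
    rw [abs_mul, abs_of_pos (by positivity : (0:ℝ) < 1 / (Real.sqrt 3 * σ))]
    ring
  rwa [heq] at h

/-- As the shape factor tends to `+∞`, the generalized Gaussian density converges
pointwise to the uniform density of variance `σ²` on `(-√3·σ, √3·σ)`. -/
theorem ggdPdf_tendsto_uniform (σ : ℝ) (hσ : 0 < σ) :
    (∀ x : ℝ, |x| < Real.sqrt 3 * σ →
      Filter.Tendsto (fun c : ℝ => ggdPdf c σ x) Filter.atTop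
        (nhds (1 / (2 * Real.sqrt 3 * σ)))) ∧
    (∀ x : ℝ, Real.sqrt 3 * σ < |x| →
      Filter.Tendsto (fun c : ℝ => ggdPdf c σ x) Filter.atTop (nhds 0)) := by
  have hA := aux_A_tendsto σ hσ
  have h3σ : (0:ℝ) < Real.sqrt 3 * σ := by positivity
  constructor
  · intro x hx
    set L : ℝ := |x| / (Real.sqrt 3 * σ) with hL
    have hL0 : 0 ≤ L := by positivity
    have hL1 : L < 1 := by
      rw [hL, div_lt_one h3σ]; exact hx
    -- |β x|^c → 0
    have habs := aux_absbx_tendsto σ hσ x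
    set r : ℝ := (L + 1) / 2 with hr
    have hrL : L < r := by rw [hr]; linarith
    have hr1 : r < 1 := by rw [hr]; linarith
    have hr0 : 0 ≤ r := by rw [hr]; linarith
    have hev : ∀ᶠ c : ℝ in Filter.atTop, |ggdBeta c σ * x| ≤ r :=
      habs.eventually_le_const hrL
    have hrpow : Filter.Tendsto (fun c : ℝ => r ^ c) Filter.atTop (nhds 0) :=
      tendsto_rpow_atTop_of_base_lt_one r (by linarith) hr1
    have hpow0 : Filter.Tendsto (fun c : ℝ => |ggdBeta c σ * x| ^ c) Filter.atTop (nhds 0) := by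
      refine tendsto_of_tendsto_of_tendsto_of_le_of_le' tendsto_const_nhds hrpow ?_ ?_
      · filter_upwards with c; positivity
      · filter_upwards [hev, Filter.eventually_ge_atTop (0:ℝ)] with c h1 h2
        exact Real.rpow_le_rpow (abs_nonneg _) h1 h2
    have hexp : Filter.Tendsto (fun c : ℝ => Real.exp (-|ggdBeta c σ * x| ^ c)) Filter.atTop
        (nhds 1) := by
      have := Real.continuous_exp.continuousAt.tendsto.comp hpow0.neg
      simpa [Function.comp_def] using this
    have := hA.mul hexp
    simpa [ggdPdf] using this
  · intro x hx
    set L : ℝ := |x| / (Real.sqrt 3 * σ) with hL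
    have hL1 : 1 < L := by
      rw [hL, lt_div_iff₀ h3σ]; simpa using hx
    have habs := aux_absbx_tendsto σ hσ x
    set r : ℝ := (L + 1) / 2 with hr
    have hrL : r < L := by rw [hr]; linarith
    have hr1 : 1 < r := by rw [hr]; linarith
    have hev : ∀ᶠ c : ℝ in Filter.atTop, r ≤ |ggdBeta c σ * x| :=
      habs.eventually_const_le hrL
    have hrpow : Filter.Tendsto (fun c : ℝ => r ^ c) Filter.atTop Filter.atTop := by
      have hlog : (0:ℝ) < Real.log r := Real.log_pos hr1
      have : Filter.Tendsto (fun c : ℝ => c * Real.log r) Filter.atTop Filter.atTop :=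
        Filter.Tendsto.atTop_mul_const hlog tendsto_id
      refine (Real.tendsto_exp_atTop.comp this).congr fun c => ?_
      rw [Function.comp_apply, Real.rpow_def_of_pos (by linarith)]
      ring_nf
    have hpow : Filter.Tendsto (fun c : ℝ => |ggdBeta c σ * x| ^ c) Filter.atTop Filter.atTop := by
      refine Filter.tendsto_atTop_mono' _ ?_ hrpow
      filter_upwards [hev, Filter.eventually_ge_atTop (0:ℝ)] with c h1 h2
      exact Real.rpow_le_rpow (by linarith) h1 h2
    have hexp : Filter.Tendsto (fun c : ℝ => Real.exp (-|ggdBeta c σ * x| ^ c)) Filter.atTop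
        (nhds 0) := Real.tendsto_exp_atBot.comp (Filter.tendsto_neg_atTop_atBot.comp hpow)
    have := hA.mul hexp
    simpa [ggdPdf] using this
end

section
/- For every c > 0, σ > 0 and positive integer n, the n-th Benford–Fourier coefficient of the generalized Gaussian density admits the closed form a_n = ∫_{ℝ} P_{c,σ}(x)·exp(−2πi·n·log₁₀|x|) dx = (2A/(β·c))·exp(2πi·n·(ln β)/(ln 10))·Γ_ℂ((ln 10 − 2πi·n)/(c·ln 10)), where Γ_ℂ denotes the Gamma function of a complex argument. -/
open Real MeasureTheory

open Set Filter Asymptotics in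
private lemma integral_comp_abs_cx {f : ℝ → ℂ} (hf : IntegrableOn (fun x => f |x|) (Ioi 0)) :
    ∫ x : ℝ, f |x| = 2 * ∫ x in Ioi (0:ℝ), f x := by
  have eq : ∫ x in Ioi (0:ℝ), f |x| = ∫ x in Ioi (0:ℝ), f x :=
    setIntegral_congr_fun measurableSet_Ioi (fun x hx => by rw [abs_of_pos hx])
  have int_Iic : IntegrableOn (fun x ↦ f |x|) (Iic 0) := by
    rw [← Measure.map_neg_eq_self (volume : Measure ℝ)]
    have m : MeasurableEmbedding fun x : ℝ => -x := (Homeomorph.neg ℝ).measurableEmbedding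
    rw [m.integrableOn_map_iff]
    simp_rw [Function.comp_def, abs_neg, neg_preimage, neg_Iic, neg_zero]
    exact Iff.mpr integrableOn_Ici_iff_integrableOn_Ioi hf
  calc ∫ x : ℝ, f |x| = (∫ x in Iic (0:ℝ), f |x|) + ∫ x in Ioi (0:ℝ), f |x| := by
        rw [← setIntegral_union (Iic_disjoint_Ioi le_rfl) measurableSet_Ioi int_Iic hf,
          Iic_union_Ioi, Measure.restrict_univ]
    _ = 2 * ∫ x in Ioi (0:ℝ), f x := by
        rw [two_mul, eq]
        congr 1
        have := integral_comp_neg_Ioi (0:ℝ) (fun x => f |x|)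
        simp only [abs_neg, neg_zero] at this
        rw [← this, eq]


/-- The `n`-th Benford–Fourier coefficient of the generalized Gaussian density:
`a_n = ∫ P_{c,σ}(x) · exp(−2πi·n·log₁₀|x|) dx`. -/
noncomputable def bfCoeff (c σ : ℝ) (n : ℕ) : ℂ :=
  ∫ x : ℝ, (ggdPdf c σ x : ℂ) *
    Complex.exp (-((2 * π * n * Real.logb 10 |x| : ℝ) : ℂ) * Complex.I)

open Set Filter Asymptotics

/-- Closed form of the `n`-th Benford–Fourier coefficient of the generalized
Gaussian density. -/
theorem bfCoeff_closed_form (c σ : ℝ) (hc : 0 < c) (hσ : 0 < σ) (n : ℕ) (hn : 0 < n) :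
    bfCoeff c σ n =
      ((2 * ggdA c σ / (ggdBeta c σ * c) : ℝ) : ℂ) *
        Complex.exp (((2 * π * n * Real.log (ggdBeta c σ) / Real.log 10 : ℝ) : ℂ) * Complex.I) *
        Complex.Gamma ((((Real.log 10 : ℝ) : ℂ) - 2 * π * n * Complex.I) /
          (((c * Real.log 10 : ℝ) : ℂ))) := by
  set β := ggdBeta c σ with hβdef
  set A := ggdA c σ with hAdef
  set L := Real.log 10 with hLdef
  have hβ : 0 < β := by
    rw [hβdef, ggdBeta]
    have h1 : 0 < Real.Gamma (3 / c) := Real.Gamma_pos_of_pos (by positivity)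
    have h2 : 0 < Real.Gamma (1 / c) := Real.Gamma_pos_of_pos (by positivity)
    positivity
  have hL : 0 < L := Real.log_pos (by norm_num)
  set s : ℂ := 1 - ((2 * π * n / L : ℝ) : ℂ) * Complex.I with hs
  have hs_re : s.re = 1 := by simp [hs]
  set F : ℝ → ℂ := fun t => ((Real.exp (-(β * t) ^ c) : ℝ) : ℂ) with hF
  set G : ℝ → ℂ := fun x => (ggdPdf c σ x : ℂ) *
    Complex.exp (-((2 * π * n * Real.logb 10 |x| : ℝ) : ℂ) * Complex.I) with hG
  -- pointwise identity on Ioi 0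
  have hpt : ∀ x ∈ Ioi (0:ℝ), G x = (A : ℂ) * ((x : ℂ) ^ (s - 1) • F x) := by
    intro x hx
    have hx0 : (0:ℝ) < x := hx
    have hcp : (x : ℂ) ^ (s - 1) =
        Complex.exp (((Real.log x : ℝ) : ℂ) * (s - 1)) := by
      rw [Complex.cpow_def_of_ne_zero (by exact_mod_cast hx0.ne'), Complex.ofReal_log hx0.le]
    have habs : |β * x| = β * x := abs_of_pos (by positivity)
    have hlogb : Real.logb 10 |x| = Real.log x / L := by
      rw [abs_of_pos hx0, Real.logb, hLdef]
    have h1 : (ggdPdf c σ x : ℂ) = (A : ℂ) * ((Real.exp (-(β * x) ^ c) : ℝ) : ℂ) := by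
      simp only [ggdPdf, ← hβdef, ← hAdef, habs]; push_cast; ring
    have h2 : Complex.exp (-((2 * π * n * Real.logb 10 |x| : ℝ) : ℂ) * Complex.I) =
        Complex.exp (((Real.log x : ℝ) : ℂ) * (s - 1)) := by
      congr 1; rw [hlogb, hs]; push_cast; field_simp; ring
    simp only [hG, hF, hcp, smul_eq_mul, h1, h2]
    ring
  -- integrability and Mellin convergence
  have hcont : ContinuousOn F (Ioi 0) := by
    apply Complex.continuous_ofReal.comp_continuousOn
    apply Real.continuous_exp.comp_continuousOn
    apply ContinuousOn.neg
    apply ContinuousOn.rpow_const (continuous_const.mul continuous_id).continuousOn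
    intro x hx
    exact Or.inr hc.le
  have hloc : LocallyIntegrableOn F (Ioi 0) :=
    hcont.locallyIntegrableOn measurableSet_Ioi
  have htop : F =O[atTop] fun t : ℝ => t ^ (-(2:ℝ)) := by
    rw [hF, Complex.isBigO_ofReal_left]
    have h1 : (fun x : ℝ => Real.exp (-x)) =o[atTop] fun x : ℝ => x ^ (-(2:ℝ)/c) := by
      simpa using isLittleO_exp_neg_mul_rpow_atTop one_pos (-(2:ℝ)/c)
    have h2 : Tendsto (fun t : ℝ => (β*t)^c) atTop atTop :=
      (tendsto_rpow_atTop hc).comp (Tendsto.const_mul_atTop hβ tendsto_id)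
    have h3 := h1.isBigO.comp_tendsto h2
    refine h3.trans ?_
    refine IsBigO.of_bound (β ^ (-(2:ℝ))) ?_
    filter_upwards [eventually_gt_atTop 0] with t ht
    have hcc : c * (-(2:ℝ)/c) = -2 := by field_simp
    have heq : ((β*t)^c)^(-(2:ℝ)/c) = β^(-(2:ℝ)) * t^(-(2:ℝ)) := by
      rw [← Real.rpow_mul (by positivity : (0:ℝ) ≤ β*t), hcc, Real.mul_rpow hβ.le ht.le]
    simp only [Function.comp_apply, heq, Real.norm_eq_abs, abs_mul]
    rw [abs_of_nonneg (Real.rpow_nonneg hβ.le _)]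
  have hbot : F =O[nhdsWithin 0 (Ioi 0)] fun t : ℝ => t ^ (-(0:ℝ)) := by
    rw [hF, Complex.isBigO_ofReal_left]
    refine IsBigO.of_bound 1 ?_
    filter_upwards [self_mem_nhdsWithin] with t ht
    have ht0 : (0:ℝ) < t := ht
    simp only [Real.norm_eq_abs, neg_zero, Real.rpow_zero, abs_one, mul_one, Real.abs_exp]
    rw [Real.exp_le_one_iff]
    have : (0:ℝ) ≤ (β*t)^c := Real.rpow_nonneg (by positivity) _
    linarith
  have hmc : MellinConvergent F s :=
    mellinConvergent_of_isBigO_rpow hloc htop (by rw [hs_re]; norm_num) hbot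
      (by rw [hs_re]; norm_num)
  -- value of the integral over `Ioi 0`
  have hint : ∫ x in Ioi (0:ℝ), G x = (A:ℂ) * mellin F s :=
    calc ∫ x in Ioi (0:ℝ), G x
        = ∫ x in Ioi (0:ℝ), (A:ℂ) * ((x:ℂ)^(s-1) • F x) :=
          setIntegral_congr_fun measurableSet_Ioi hpt
      _ = (A:ℂ) * ∫ x in Ioi (0:ℝ), ((x:ℂ)^(s-1) • F x) := integral_const_mul _ _
      _ = (A:ℂ) * mellin F s := rfl
  have hIntOn : IntegrableOn (fun x => G |x|) (Ioi 0) := by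
    have h0 : IntegrableOn (fun t : ℝ => (t:ℂ)^(s-1) • F t) (Ioi 0) := hmc
    have h1 : IntegrableOn (fun t : ℝ => (A:ℂ) * ((t:ℂ)^(s-1) • F t)) (Ioi 0) :=
      h0.const_mul _
    refine h1.congr_fun (fun x hx => ?_) measurableSet_Ioi
    rw [abs_of_pos (show (0:ℝ) < x from hx)]
    exact (hpt x hx).symm
  -- Mellin transform of F
  have hmell : mellin F s = (β:ℂ)^(-s) • (|c|⁻¹ • Complex.GammaIntegral (s/(c:ℂ))) := by
    rw [Complex.GammaIntegral_eq_mellin]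
    exact (mellin_comp_mul_left (fun u : ℝ => ((Real.exp (-u ^ c) : ℝ) : ℂ)) s hβ).trans
      (congrArg (fun z : ℂ => (β:ℂ)^(-s) • z)
        (mellin_comp_rpow (fun v : ℝ => ((Real.exp (-v) : ℝ) : ℂ)) s c))
  have hre : 0 < (s/(c:ℂ)).re := by
    rw [Complex.div_ofReal_re, hs_re]; positivity
  have hΓint : Complex.GammaIntegral (s/(c:ℂ)) = Complex.Gamma (s/(c:ℂ)) :=
    (Complex.Gamma_eq_integral hre).symm
  have hc' : (c:ℂ) ≠ 0 := by exact_mod_cast hc.ne'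
  have hL' : (L:ℂ) ≠ 0 := by exact_mod_cast hL.ne'
  have hβ' : (β:ℂ) ≠ 0 := by exact_mod_cast hβ.ne'
  have hΓarg : s/(c:ℂ) = (((L:ℝ):ℂ) - 2*π*n*Complex.I) / (((c*L : ℝ)):ℂ) := by
    have hcL : ((c*L : ℝ):ℂ) ≠ 0 := by push_cast; exact mul_ne_zero hc' hL'
    rw [hs, div_eq_div_iff hc' hcL]
    push_cast
    field_simp
  have hβpow : (β:ℂ)^(-s)
      = ((β⁻¹ : ℝ):ℂ) * Complex.exp (((2*π*n*Real.log β/L : ℝ):ℂ) * Complex.I) := by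
    rw [Complex.cpow_def_of_ne_zero hβ' (-s), ← Complex.ofReal_log hβ.le]
    have e3 : (↑(Real.log β) * (-s) : ℂ)
        = ((-Real.log β : ℝ):ℂ) + ((2*π*n*Real.log β/L : ℝ):ℂ) * Complex.I := by
      rw [hs]; push_cast; field_simp; ring
    rw [e3, Complex.exp_add, ← Complex.ofReal_exp, Real.exp_neg, Real.exp_log hβ]
  -- assemble
  have hstep : bfCoeff c σ n = 2 * ((A:ℂ) * mellin F s) := by
    rw [bfCoeff]
    have habs2 : (fun x : ℝ => (ggdPdf c σ x :ℂ) *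
        Complex.exp (-((2*π*n*Real.logb 10 |x| : ℝ):ℂ)*Complex.I)) = fun x => G |x| := by
      funext x
      have hpdf : ggdPdf c σ |x| = ggdPdf c σ x := by
        simp [ggdPdf, abs_mul, abs_abs]
      simp only [hG, abs_abs, hpdf]
    rw [habs2, integral_comp_abs_cx hIntOn, hint]
  rw [hstep, hmell, hΓint, hΓarg, hβpow, smul_eq_mul, Complex.real_smul, abs_of_pos hc]
  push_cast
  field_simp
end

section
/- For every c > 0, σ > 0 and positive integer n, the infinite product ∏_{k=0}^{∞} [1 + (2πn/((ln 10)·(c·k+1)))²]^{−1} converges, and the modulus of the n-th Benford–Fourier coefficient of the generalized Gaussian density satisfies |a_n| = ( ∏_{k=0}^{∞} [1 + (2πn/((ln 10)·(c·k+1)))²]^{−1} )^{1/2}. -/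
open Real MeasureTheory

section Aux

open Set Filter Finset

lemma cpow_pos_real {y : ℝ} (hy : 0 < y) (w : ℂ) :
    (y:ℂ) ^ w = Complex.exp (w * (Real.log y : ℂ)) := by
  rw [Complex.cpow_def_of_ne_zero (by exact_mod_cast hy.ne'), Complex.ofReal_log hy.le, mul_comm]

-- even function integral, complex valued
lemma integral_comp_abs' {E : Type*} [NormedAddCommGroup E] [NormedSpace ℝ E] {f : ℝ → E} :
    ∫ x : ℝ, f |x| = (2:ℝ) • ∫ x in Ioi (0:ℝ), f x := by
  have eq : ∫ (x : ℝ) in Ioi 0, f |x| = ∫ (x : ℝ) in Ioi 0, f x := by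
    refine setIntegral_congr_fun measurableSet_Ioi (fun _ hx => ?_)
    rw [abs_eq_self.mpr (le_of_lt (by exact hx))]
  by_cases hf : IntegrableOn (fun x => f |x|) (Ioi 0)
  · have int_Iic : IntegrableOn (fun x ↦ f |x|) (Iic 0) := by
      rw [← Measure.map_neg_eq_self (volume : Measure ℝ)]
      let m : MeasurableEmbedding fun x : ℝ => -x := (Homeomorph.neg ℝ).measurableEmbedding
      rw [m.integrableOn_map_iff]
      simp_rw [Function.comp_def, abs_neg, neg_preimage, neg_Iic, neg_zero]
      exact Iff.mpr integrableOn_Ici_iff_integrableOn_Ioi hf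
    calc
      _ = (∫ x in Iic 0, f |x|) + ∫ x in Ioi 0, f |x| := by
        rw [← setIntegral_union (Iic_disjoint_Ioi le_rfl) measurableSet_Ioi int_Iic hf,
          Iic_union_Ioi, Measure.restrict_univ]
      _ = (2:ℝ) • ∫ x in Ioi 0, f x := by
        rw [two_smul, eq]
        congr! 1
        rw [← neg_zero, ← integral_comp_neg_Iic, neg_zero]
        refine setIntegral_congr_fun measurableSet_Iic (fun _ hx => ?_)
        rw [abs_eq_neg_self.mpr (by exact hx)]
  · have : ¬ Integrable (fun x => f |x|) := by
      contrapose! hf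
      exact hf.integrableOn
    rw [← eq, integral_undef hf, integral_undef this, smul_zero]

lemma mellin_exp_rpow {p : ℝ} (hp : 0 < p) {s : ℂ} (hs : 0 < s.re) :
    ∫ x in Ioi (0:ℝ), (Real.exp (-x ^ p) : ℂ) * (x:ℂ) ^ (s - 1) =
      ((p:ℂ))⁻¹ * Complex.Gamma (s / p) := by
  have hp' : (p:ℂ) ≠ 0 := by exact_mod_cast hp.ne'
  calc
    _ = ∫ x in Ioi (0:ℝ), (|p| * x ^ (p - 1)) •
          (((p:ℂ))⁻¹ * (Real.exp (-(x^p)) : ℂ) * ((x ^ p : ℝ):ℂ) ^ (s / p - 1)) := by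
      refine setIntegral_congr_fun measurableSet_Ioi (fun x hx => ?_)
      have hx : (0:ℝ) < x := hx
      have hxp : (0:ℝ) < x ^ p := rpow_pos_of_pos hx p
      set L : ℂ := (Real.log x : ℂ) with hL
      have h1 : ((x ^ (p-1) : ℝ) : ℂ) = Complex.exp (((p:ℂ)-1) * L) := by
        rw [Real.rpow_def_of_pos hx, Complex.ofReal_exp]; push_cast; rw [hL]; ring_nf
      rw [abs_of_pos hp, cpow_pos_real hxp, cpow_pos_real hx, Real.log_rpow hx,
        Complex.real_smul, Complex.ofReal_mul, h1]
      rw [show ((p * Real.log x : ℝ) : ℂ) = (p:ℂ) * L by push_cast; ring]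
      have key : ((p:ℂ)) * Complex.exp (((p:ℂ)-1)*L) *
          (((p:ℂ))⁻¹ * (Real.exp (-(x^p)) : ℂ) * Complex.exp ((s/(p:ℂ)-1) * ((p:ℂ)*L))) =
          (Real.exp (-(x^p)) : ℂ) * Complex.exp ((((p:ℂ)-1)*L + (s/(p:ℂ)-1)*((p:ℂ)*L))) := by
        rw [Complex.exp_add]; field_simp
      rw [key, show (((p:ℂ)-1)*L + (s/(p:ℂ)-1)*((p:ℂ)*L)) = (s-1)*L by field_simp; ring]
    _ = ∫ x in Ioi (0:ℝ), ((p:ℂ))⁻¹ * (Real.exp (-x) : ℂ) * ((x:ℝ):ℂ) ^ (s / p - 1) := by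
      exact integral_comp_rpow_Ioi (fun x => ((p:ℂ))⁻¹ * (Real.exp (-x) : ℂ) * ((x:ℝ):ℂ) ^ (s / p - 1)) hp.ne'
    _ = ((p:ℂ))⁻¹ * Complex.Gamma (s / p) := by
      rw [Complex.Gamma_eq_integral (by rw [Complex.div_ofReal_re]; positivity),
        Complex.GammaIntegral]
      simp_rw [mul_assoc, integral_const_mul]

lemma ggdBeta_pos {c σ : ℝ} (hc : 0 < c) (hσ : 0 < σ) : 0 < ggdBeta c σ := by
  have h1 := Real.Gamma_pos_of_pos (by positivity : (0:ℝ) < 3 / c)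
  have h2 := Real.Gamma_pos_of_pos (by positivity : (0:ℝ) < 1 / c)
  unfold ggdBeta
  positivity

lemma abs_bfCoeff_aux (c σ t : ℝ) (hc : 0 < c) (hσ : 0 < σ) :
    ‖∫ x : ℝ, (ggdPdf c σ x : ℂ) *
        Complex.exp (-((t * Real.log |x| : ℝ) : ℂ) * Complex.I)‖ =
      ‖Complex.Gamma ((1 - (t:ℂ) * Complex.I) / c)‖ / Real.Gamma (1/c) := by
  set β := ggdBeta c σ with hβdef
  have hβ : 0 < β := ggdBeta_pos hc hσ
  have hΓ : 0 < Real.Gamma (1/c) := Real.Gamma_pos_of_pos (by positivity)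
  have hA : 0 < ggdA c σ := by
    rw [ggdA]; positivity
  set s : ℂ := 1 - (t:ℂ) * Complex.I with hs
  have hsre : 0 < s.re := by simp [hs]
  set F : ℝ → ℂ := fun y => (↑(ggdA c σ * Real.exp (-(β * y) ^ c)) : ℂ) *
      Complex.exp (-((t * Real.log y : ℝ) : ℂ) * Complex.I) with hF
  have step1 : (∫ x : ℝ, (ggdPdf c σ x : ℂ) *
        Complex.exp (-((t * Real.log |x| : ℝ) : ℂ) * Complex.I)) = ∫ x : ℝ, F |x| := by
    congr 1 with x
    simp only [hF, ggdPdf, abs_mul, ← hβdef, abs_of_pos hβ]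
  set I : ℂ := ∫ y in Ioi (0:ℝ), (Real.exp (-(β * y) ^ c) : ℂ) * (y:ℂ) ^ (s - 1) with hI
  have step2 : ∫ y in Ioi (0:ℝ), F y = (ggdA c σ : ℂ) * I := by
    rw [hI, ← integral_const_mul]
    refine setIntegral_congr_fun measurableSet_Ioi (fun y hy => ?_)
    have hy : (0:ℝ) < y := hy
    simp only [hF]
    rw [cpow_pos_real hy]
    push_cast
    rw [mul_assoc]
    congr 2
    rw [hs]
    ring
  set g : ℝ → ℂ := fun u => (Real.exp (-u ^ c) : ℂ) * (u:ℂ) ^ (s - 1) with hg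
  have step3 : (β:ℂ) ^ (s - 1) * I = (β⁻¹ : ℝ) • (((c:ℂ))⁻¹ * Complex.Gamma (s / c)) := by
    have lhs_eq : (β:ℂ) ^ (s - 1) * I = ∫ y in Ioi (0:ℝ), g (β * y) := by
      rw [hI, ← integral_const_mul]
      refine setIntegral_congr_fun measurableSet_Ioi (fun y hy => ?_)
      have hy : (0:ℝ) < y := hy
      have hby : (0:ℝ) < β * y := by positivity
      simp only [hg]
      rw [cpow_pos_real hy, cpow_pos_real hby, cpow_pos_real hβ,
        Real.log_mul hβ.ne' hy.ne', Complex.ofReal_add, mul_add, Complex.exp_add]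
      ring
    rw [lhs_eq, integral_comp_mul_left_Ioi g 0 hβ, mul_zero]
    rw [show ∫ y in Ioi (0:ℝ), g y = ((c:ℂ))⁻¹ * Complex.Gamma (s / c) from
      mellin_exp_rpow hc hsre]
  have habsI : ‖I‖ = β⁻¹ * c⁻¹ * ‖Complex.Gamma (s / c)‖ := by
    have h1 : ‖(β:ℂ) ^ (s - 1) * I‖ = ‖I‖ := by
      rw [norm_mul, Complex.norm_cpow_eq_rpow_re_of_pos hβ]
      have : (s - 1).re = 0 := by simp [hs]
      rw [this, Real.rpow_zero, one_mul]
    rw [← h1, step3]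
    simp only [Complex.real_smul, norm_mul, Complex.norm_real, norm_inv, Real.norm_eq_abs]
    rw [abs_of_pos hβ, abs_of_pos hc]
    ring
  rw [step1, integral_comp_abs', setIntegral_congr_fun measurableSet_Ioi
      (fun y (hy : y ∈ Ioi (0:ℝ)) => rfl), step2]
  rw [Complex.real_smul, norm_mul, norm_mul, Complex.norm_real, Complex.norm_real, Real.norm_eq_abs, Real.norm_eq_abs, habsI]
  rw [abs_of_pos (by norm_num : (0:ℝ) < 2), abs_of_pos hA]
  have hcast : s / (c:ℂ) = (1 - (t:ℂ) * Complex.I) / c := by rw [hs]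
  rw [hcast]
  rw [ggdA]
  field_simp
  ring


lemma summable_b (c t : ℝ) (hc : 0 < c) :
    Summable (fun k : ℕ => (t / (c * k + 1)) ^ 2) := by
  set m : ℝ := min c 1 with hm
  have hm0 : 0 < m := lt_min hc one_pos
  have hsum1 : Summable (fun k : ℕ => (((k:ℝ) + 1) ^ 2)⁻¹) := by
    have base : Summable (fun n : ℕ => ((n:ℝ) ^ 2)⁻¹) := by
      simpa [one_div] using Real.summable_one_div_nat_pow.mpr (by norm_num : 1 < 2)
    have := (summable_nat_add_iff (f := fun n : ℕ => ((n:ℝ) ^ 2)⁻¹) 1).mpr base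
    refine this.congr fun k => ?_
    push_cast
    ring_nf
  refine Summable.of_nonneg_of_le (fun k => sq_nonneg _)
    (fun k => ?_) ((hsum1.mul_left ((t/m)^2)))
  have hden : m * (k + 1) ≤ c * k + 1 := by
    have h1 : m * k ≤ c * k := by
      have h := min_le_left c 1
      nlinarith [Nat.cast_nonneg (α := ℝ) k]
    have h2 : m ≤ 1 := min_le_right c 1
    nlinarith
  have hpos : (0:ℝ) < m * ((k:ℝ) + 1) := by positivity
  have key : t ^ 2 / (c * k + 1) ^ 2 ≤ t ^ 2 / (m * ((k:ℝ)+1)) ^ 2 := by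
    gcongr
  calc (t / (c * k + 1)) ^ 2 = t ^ 2 / (c * k + 1) ^ 2 := by rw [div_pow]
    _ ≤ t ^ 2 / (m * ((k:ℝ)+1)) ^ 2 := key
    _ = (t/m)^2 * (((k:ℝ) + 1) ^ 2)⁻¹ := by
        rw [mul_pow, div_pow, div_eq_mul_inv, mul_inv]
        ring

lemma multipliable_aux (c t : ℝ) (hc : 0 < c) :
    Multipliable (fun k : ℕ => (1 + (t / (c * k + 1)) ^ 2)⁻¹) := by
  have hpos : ∀ k : ℕ, (0:ℝ) < (1 + (t / (c * k + 1)) ^ 2)⁻¹ := by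
    intro k; positivity
  refine Real.multipliable_of_summable_log (fun k => hpos k) ?_
  have h1 : ∀ k : ℕ, Real.log ((1 + (t / (c * k + 1)) ^ 2)⁻¹)
      = -Real.log (1 + (t / (c * k + 1)) ^ 2) := fun k => Real.log_inv _
  simp_rw [h1]
  refine Summable.neg ?_
  refine Summable.of_nonneg_of_le (fun k => Real.log_nonneg (by nlinarith [sq_nonneg (t / (c * k + 1))]))
    (fun k => ?_) (summable_b c t hc)
  have := Real.log_le_sub_one_of_pos (show (0:ℝ) < 1 + (t / (c * k + 1)) ^ 2 by positivity)
  linarith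

lemma tprod_aux (c t : ℝ) (hc : 0 < c) :
    ∏' k : ℕ, (1 + (t / (c * k + 1)) ^ 2)⁻¹ =
      ‖Complex.Gamma ((1 - (t:ℂ) * Complex.I) / c)‖ ^ 2 / Real.Gamma (1/c) ^ 2 := by
  set r : ℝ := 1/c with hr
  have hr0 : 0 < r := by positivity
  set z : ℂ := (1 - (t:ℂ) * Complex.I) / c with hz
  have hzre : z.re = r := by
    rw [hz, hr]
    rw [show ((c:ℂ)) = ((c:ℝ):ℂ) from rfl, Complex.div_ofReal_re]
    simp
  have hzim : z.im = -t/c := by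
    rw [hz, Complex.div_ofReal_im]
    simp
  have hΓr : 0 < Real.Gamma r := Real.Gamma_pos_of_pos hr0
  have hΓrC : Complex.Gamma (r:ℂ) = (Real.Gamma r : ℂ) := Complex.Gamma_ofReal r
  have hzj : ∀ j : ℕ, z + j ≠ 0 := by
    intro j h
    have := congrArg Complex.re h
    simp only [Complex.add_re, Complex.natCast_re, Complex.zero_re, hzre] at this
    have : (0:ℝ) < r + j := by positivity
    linarith
  -- key finite computation
  have key : ∀ N : ℕ, 1 ≤ N →
      ‖Complex.GammaSeq z N / Complex.GammaSeq (r:ℂ) N‖ ^ 2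
        = ∏ j ∈ Finset.range (N+1), (1 + (t / (c * j + 1)) ^ 2)⁻¹ := by
    intro N hN
    have hNpos : (0:ℝ) < (N:ℝ) := by exact_mod_cast hN
    have hterm : ∀ j : ℕ, (1 + (t / (c * j + 1)) ^ 2)⁻¹
        = (r + j)^2 / ((r + j)^2 + (t/c)^2) := by
      intro j
      have h1 : (0:ℝ) < c * j + 1 := by positivity
      have h2 : (0:ℝ) < (r + j)^2 + (t/c)^2 := by positivity
      rw [eq_div_iff h2.ne', hr]
      field_simp
      ring
    have habsz : ∀ j : ℕ, ‖z + j‖ ^ 2 = (r + j)^2 + (t/c)^2 := by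
      intro j
      rw [Complex.sq_norm, Complex.normSq_apply]
      simp only [Complex.add_re, Complex.add_im, Complex.natCast_re, Complex.natCast_im,
        hzre, hzim, add_zero]
      ring
    have hA : ‖Complex.GammaSeq z N‖
        = (N:ℝ) ^ r * (Nat.factorial N : ℝ) / ∏ j ∈ Finset.range (N+1), ‖z + j‖ := by
      rw [Complex.GammaSeq, norm_div, norm_mul, norm_prod]
      congr 2
      · rw [show ((N:ℕ):ℂ) = (((N:ℝ)):ℂ) by push_cast; rfl,
          Complex.norm_cpow_eq_rpow_re_of_pos hNpos, hzre]
      · rw [show ((Nat.factorial N : ℕ):ℂ) = (((Nat.factorial N : ℝ)):ℂ) by push_cast; rfl, Complex.norm_real, Real.norm_eq_abs,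
          abs_of_pos (by exact_mod_cast Nat.factorial_pos N)]
    have hB : ‖Complex.GammaSeq (r:ℂ) N‖
        = (N:ℝ) ^ r * (Nat.factorial N : ℝ) / ∏ j ∈ Finset.range (N+1), (r + j) := by
      rw [Complex.GammaSeq, norm_div, norm_mul, norm_prod]
      congr 2
      · rw [show ((N:ℕ):ℂ) = (((N:ℝ)):ℂ) by push_cast; rfl,
          Complex.norm_cpow_eq_rpow_re_of_pos hNpos, Complex.ofReal_re]
      · rw [show ((Nat.factorial N : ℕ):ℂ) = (((Nat.factorial N : ℝ)):ℂ) by push_cast; rfl, Complex.norm_real, Real.norm_eq_abs,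
          abs_of_pos (by exact_mod_cast Nat.factorial_pos N)]
      · funext j
        rw [show ((r:ℂ) + (j:ℕ)) = (((r + j : ℝ)):ℂ) by push_cast; ring, Complex.norm_real, Real.norm_eq_abs,
          abs_of_pos (by positivity)]
    have hfac : (0:ℝ) < (Nat.factorial N : ℝ) := by exact_mod_cast N.factorial_pos
    have ha0 : (0:ℝ) < (N:ℝ) ^ r * (Nat.factorial N : ℝ) := by positivity
    have hP0 : (0:ℝ) < ∏ j ∈ Finset.range (N+1), ‖z + j‖ :=
      Finset.prod_pos (fun j _ => norm_pos_iff.mpr (hzj j))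
    have hQ0 : (0:ℝ) < ∏ j ∈ Finset.range (N+1), (r + j) :=
      Finset.prod_pos (fun j _ => by positivity)
    rw [norm_div, hA, hB]
    rw [div_div_div_comm, div_self ha0.ne', one_div, inv_div]
    rw [div_pow, ← Finset.prod_pow, ← Finset.prod_pow]
    rw [Finset.prod_congr rfl (fun j _ => habsz j),
      ← Finset.prod_div_distrib]
    exact (Finset.prod_congr rfl (fun j _ => (hterm j).symm))
  -- limit
  have htend : Filter.Tendsto (fun N => Complex.GammaSeq z N / Complex.GammaSeq (r:ℂ) N)
      Filter.atTop (nhds (Complex.Gamma z / Complex.Gamma (r:ℂ))) := by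
    refine Filter.Tendsto.div (Complex.GammaSeq_tendsto_Gamma z)
      (Complex.GammaSeq_tendsto_Gamma _) ?_
    rw [hΓrC]
    exact_mod_cast hΓr.ne'
  have habs : Filter.Tendsto
      (fun N => ‖Complex.GammaSeq z N / Complex.GammaSeq (r:ℂ) N‖ ^ 2)
      Filter.atTop (nhds (‖Complex.Gamma z / Complex.Gamma (r:ℂ)‖ ^ 2)) := by
    have := htend.norm
    exact this.pow 2
  have heq : (fun N => ‖Complex.GammaSeq z N / Complex.GammaSeq (r:ℂ) N‖ ^ 2)
      =ᶠ[Filter.atTop] (fun N => ∏ j ∈ Finset.range (N+1), (1 + (t / (c * j + 1)) ^ 2)⁻¹) := by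
    filter_upwards [Filter.eventually_ge_atTop 1] with N hN
    exact key N hN
  have ht2 : Filter.Tendsto (fun N => ∏ j ∈ Finset.range (N+1), (1 + (t / (c * j + 1)) ^ 2)⁻¹)
      Filter.atTop (nhds (‖Complex.Gamma z / Complex.Gamma (r:ℂ)‖ ^ 2)) :=
    habs.congr' heq
  have ht3 : Filter.Tendsto (fun N => ∏ j ∈ Finset.range N, (1 + (t / (c * j + 1)) ^ 2)⁻¹)
      Filter.atTop (nhds (‖Complex.Gamma z / Complex.Gamma (r:ℂ)‖ ^ 2)) :=
    (tendsto_add_atTop_iff_nat 1).mp ht2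
  have hm := multipliable_aux c t hc
  have := tendsto_nhds_unique hm.hasProd.tendsto_prod_nat ht3
  rw [this, norm_div, hΓrC, Complex.norm_real, Real.norm_eq_abs, abs_of_pos hΓr, div_pow]

end Aux

/-- The modulus of the `n`-th Benford–Fourier coefficient of the generalized
Gaussian density is given by a convergent infinite product depending only on
the shape factor `c`. -/
theorem bfCoeff_abs_eq_tprod (c σ : ℝ) (hc : 0 < c) (hσ : 0 < σ) (n : ℕ) (hn : 0 < n) :
    Multipliable (fun k : ℕ => (1 + (2 * π * n / (Real.log 10 * (c * k + 1))) ^ 2)⁻¹) ∧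
    ‖bfCoeff c σ n‖ =
      Real.sqrt (∏' k : ℕ, (1 + (2 * π * n / (Real.log 10 * (c * k + 1))) ^ 2)⁻¹) := by
  set t : ℝ := 2 * π * n / Real.log 10 with ht
  have harg : ∀ k : ℕ, 2 * π * n / (Real.log 10 * (c * k + 1)) = t / (c * k + 1) := by
    intro k
    rw [ht, div_div]
  simp_rw [harg]
  refine ⟨multipliable_aux c t hc, ?_⟩
  have h1 : bfCoeff c σ n = ∫ x : ℝ, (ggdPdf c σ x : ℂ) *
      Complex.exp (-((t * Real.log |x| : ℝ) : ℂ) * Complex.I) := by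
    unfold bfCoeff
    congr 1 with x
    rw [show (2 * π * (n:ℝ) * Real.logb 10 |x| : ℝ) = t * Real.log |x| from by
      rw [Real.logb, ht]; ring]
  have hΓpos : 0 < Real.Gamma (1/c) := Real.Gamma_pos_of_pos (by positivity)
  rw [h1, abs_bfCoeff_aux c σ t hc hσ, tprod_aux c t hc,
    show ‖Complex.Gamma ((1 - (t:ℂ) * Complex.I) / c)‖ ^ 2 / Real.Gamma (1/c) ^ 2
      = (‖Complex.Gamma ((1 - (t:ℂ) * Complex.I) / c)‖ / Real.Gamma (1/c)) ^ 2 from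
    (div_pow _ _ 2).symm,
    Real.sqrt_sq (div_nonneg (norm_nonneg _) hΓpos.le)]
end

section
/- The modulus of the Benford–Fourier coefficients depends only on the shape factor c and not on σ: for every c > 0, all σ₁, σ₂ > 0 and every positive integer n, one has |∫_{ℝ} P_{c,σ₁}(x)·exp(−2πi·n·log₁₀|x|) dx| = |∫_{ℝ} P_{c,σ₂}(x)·exp(−2πi·n·log₁₀|x|) dx|. -/
open Real MeasureTheory

/-- The modulus of the Benford–Fourier coefficients depends only on the shape
factor `c`, not on the scale `σ`. -/
theorem bfCoeff_abs_independent_of_sigma (c : ℝ) (hc : 0 < c) (σ₁ σ₂ : ℝ)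
    (hσ₁ : 0 < σ₁) (hσ₂ : 0 < σ₂) (n : ℕ) (hn : 0 < n) :
    ‖bfCoeff c σ₁ n‖ = ‖bfCoeff c σ₂ n‖ := by
  have hΓ1 : 0 < Real.Gamma (1 / c) := Real.Gamma_pos_of_pos (by positivity)
  have hΓ3 : 0 < Real.Gamma (3 / c) := Real.Gamma_pos_of_pos (by positivity)
  have hk : 0 < Real.sqrt (Real.Gamma (3 / c) / Real.Gamma (1 / c)) :=
    Real.sqrt_pos.mpr (by positivity)
  set r : ℝ := σ₂ / σ₁ with hr
  have hrpos : 0 < r := by positivity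
  -- relations between parameters
  have hβ : ggdBeta c σ₂ * r = ggdBeta c σ₁ := by
    simp only [ggdBeta, hr]
    field_simp
  have hA : ggdA c σ₂ = (1 / r) * ggdA c σ₁ := by
    simp only [ggdA, ggdBeta, hr]
    field_simp
  set t : ℝ := 2 * π * n * Real.logb 10 r with ht
  set f : ℝ → ℂ := fun x => (ggdPdf c σ₂ x : ℂ) *
      Complex.exp (-((2 * π * n * Real.logb 10 |x| : ℝ) : ℂ) * Complex.I) with hf
  have hcomp : (∫ y : ℝ, f (r * y)) = |r⁻¹| • bfCoeff c σ₂ n := by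
    rw [bfCoeff]
    exact MeasureTheory.Measure.integral_comp_mul_left f r
  have hae : (∫ y : ℝ, f (r * y)) =
      Complex.exp (-(t : ℂ) * Complex.I) * (((1 / r : ℝ) : ℂ) * bfCoeff c σ₁ n) := by
    rw [bfCoeff, ← MeasureTheory.integral_const_mul, ← MeasureTheory.integral_const_mul]
    apply MeasureTheory.integral_congr_ae
    have h0 : (volume : Measure ℝ) {(0 : ℝ)} = 0 := measure_singleton 0
    filter_upwards [compl_mem_ae_iff.mpr h0] with y hy
    have hy0 : y ≠ 0 := by simpa using hy
    have hpdf : ggdPdf c σ₂ (r * y) = (1 / r) * ggdPdf c σ₁ y := by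
      have : ggdBeta c σ₂ * (r * y) = ggdBeta c σ₁ * y := by
        rw [← hβ]; ring
      rw [ggdPdf, ggdPdf, this, hA]
      ring
    have hlog : Real.logb 10 |r * y| = Real.logb 10 r + Real.logb 10 |y| := by
      rw [abs_mul, abs_of_pos hrpos, Real.logb_mul hrpos.ne' (abs_ne_zero.mpr hy0)]
    have hexp : Complex.exp (-((2 * π * n * Real.logb 10 |r * y| : ℝ) : ℂ) * Complex.I)
        = Complex.exp (-(t : ℂ) * Complex.I) *
          Complex.exp (-((2 * π * n * Real.logb 10 |y| : ℝ) : ℂ) * Complex.I) := by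
      rw [← Complex.exp_add]
      congr 1
      rw [hlog, ht]
      push_cast
      ring
    simp only [hf, hpdf, hexp]
    push_cast
    ring
  have habs : |r⁻¹| * ‖bfCoeff c σ₂ n‖
      = (1 / r) * ‖bfCoeff c σ₁ n‖ := by
    have := congrArg (‖·‖) (hcomp.symm.trans hae)
    simpa [norm_mul, Complex.norm_real, abs_of_pos hrpos, neg_mul, ← Complex.ofReal_neg,
      Complex.norm_exp_ofReal_mul_I, abs_of_pos (one_div_pos.mpr hrpos)] using this
  rw [abs_of_pos (inv_pos.mpr hrpos)] at habs
  have hinv : r⁻¹ = 1 / r := (one_div r).symm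
  rw [hinv] at habs
  have h1r : (0 : ℝ) < 1 / r := one_div_pos.mpr hrpos
  exact (mul_left_cancel₀ h1r.ne' habs).symm
end

section
/- For every c > 0, σ > 0, the sequence of moduli of the Benford–Fourier coefficients is strictly decreasing in n: for every positive integer n, |a_{n+1}| < |a_n|. -/
open Real MeasureTheory

open Set Filter Topology
private lemma gammaSeq_abs_eq {s : ℂ} {x : ℝ} (hres : s.re = x) {n : ℕ} (hn : 1 ≤ n) :
    ‖Complex.GammaSeq s n‖ =
      (n : ℝ) ^ x * (n.factorial : ℝ) / ∏ j ∈ Finset.range (n + 1), ‖s + j‖ := by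
  have hn' : (0:ℝ) < (n:ℝ) := by exact_mod_cast hn
  rw [Complex.GammaSeq, norm_div, norm_mul, norm_prod]
  congr 2
  · rw [show ((n:ℂ)) = ((n:ℝ):ℂ) by push_cast; ring,
      Complex.norm_cpow_eq_rpow_re_of_pos hn', hres]
  · exact Complex.norm_natCast _

private lemma gamma_abs_lt {x y₁ y₂ : ℝ} (hx : 0 < x) (hy₂ : 0 < y₂) (h12 : y₂ < y₁) :
    ‖Complex.Gamma (x + y₁ * Complex.I)‖ <
      ‖Complex.Gamma (x + y₂ * Complex.I)‖ := by
  have hy₁ : 0 < y₁ := hy₂.trans h12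
  set s₁ : ℂ := x + y₁ * Complex.I with hs₁
  set s₂ : ℂ := x + y₂ * Complex.I with hs₂
  have hre₁ : s₁.re = x := by simp [hs₁]
  have hre₂ : s₂.re = x := by simp [hs₂]
  have habsj : ∀ (y : ℝ) (j : ℕ),
      ‖(↑x + ↑y * Complex.I) + j‖ = Real.sqrt ((x + j) ^ 2 + y ^ 2) := by
    intro y j
    rw [show (↑x + ↑y * Complex.I) + (j:ℂ) = (↑(x + j) + ↑y * Complex.I) by push_cast; ring,
      Complex.norm_add_mul_I]
  have hkey : ∀ j : ℕ, ‖s₂ + j‖ ≤ ‖s₁ + j‖ := by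
    intro j
    rw [hs₁, hs₂, habsj, habsj]
    apply Real.sqrt_le_sqrt
    nlinarith
  have habs₂pos : ∀ j : ℕ, 0 < ‖s₂ + j‖ := by
    intro j
    rw [hs₂, habsj]
    positivity
  have habs₁pos : ∀ j : ℕ, 0 < ‖s₁ + j‖ := by
    intro j
    rw [hs₁, habsj]
    positivity
  have hlt : ‖s₂‖ < ‖s₁‖ := by
    rw [hs₁, hs₂, Complex.norm_add_mul_I, Complex.norm_add_mul_I]
    apply Real.sqrt_lt_sqrt (by positivity)
    nlinarith
  have hs₁0 : 0 < ‖s₁‖ := by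
    rw [hs₁, Complex.norm_add_mul_I]; positivity
  have hs₂0 : 0 < ‖s₂‖ := by
    rw [hs₂, Complex.norm_add_mul_I]; positivity
  set r : ℝ := ‖s₂‖ / ‖s₁‖ with hr
  have hr1 : r < 1 := (div_lt_one hs₁0).2 hlt
  have bound : ∀ n : ℕ, 1 ≤ n →
      ‖Complex.GammaSeq s₁ n‖ ≤ r * ‖Complex.GammaSeq s₂ n‖ := by
    intro n hn
    rw [gammaSeq_abs_eq hre₁ hn, gammaSeq_abs_eq hre₂ hn]
    set N : ℝ := (n : ℝ) ^ x * (n.factorial : ℝ) with hN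
    have hNpos : 0 < N := by
      have : (0:ℝ) < (n:ℝ) := by exact_mod_cast hn
      positivity
    set p₁ : ℝ := ∏ j ∈ Finset.range (n + 1), ‖s₁ + j‖ with hp₁
    set p₂ : ℝ := ∏ j ∈ Finset.range (n + 1), ‖s₂ + j‖ with hp₂
    have hp₁pos : 0 < p₁ := Finset.prod_pos fun j _ => habs₁pos j
    have hp₂pos : 0 < p₂ := Finset.prod_pos fun j _ => habs₂pos j
    have hprod : ‖s₁‖ * p₂ ≤ ‖s₂‖ * p₁ := by
      rw [hp₁, hp₂, Finset.prod_range_succ', Finset.prod_range_succ']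
      simp only [Nat.cast_zero, add_zero]
      have h := Finset.prod_le_prod (s := Finset.range n)
        (f := fun j => ‖s₂ + ((j:ℕ) + 1 : ℕ)‖)
        (g := fun j => ‖s₁ + ((j:ℕ) + 1 : ℕ)‖)
        (fun j _ => (habs₂pos _).le) (fun j _ => hkey (j + 1))
      have h2 := mul_le_mul_of_nonneg_left h (mul_pos hs₁0 hs₂0).le
      nlinarith [h2]
    rw [hr, div_mul_div_comm, div_le_div_iff₀ hp₁pos (mul_pos hs₁0 hp₂pos)]
    calc N * (‖s₁‖ * p₂) ≤ N * (‖s₂‖ * p₁) :=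
          mul_le_mul_of_nonneg_left hprod hNpos.le
      _ = ‖s₂‖ * N * p₁ := by ring
  have t₁ : Tendsto (fun n => ‖Complex.GammaSeq s₁ n‖) atTop
      (𝓝 (‖Complex.Gamma s₁‖)) :=
    (continuous_norm.tendsto _).comp (Complex.GammaSeq_tendsto_Gamma s₁)
  have t₂ : Tendsto (fun n => r * ‖Complex.GammaSeq s₂ n‖) atTop
      (𝓝 (r * ‖Complex.Gamma s₂‖)) :=
    ((continuous_norm.tendsto _).comp (Complex.GammaSeq_tendsto_Gamma s₂)).const_mul r
  have hle : ‖Complex.Gamma s₁‖ ≤ r * ‖Complex.Gamma s₂‖ :=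
    le_of_tendsto_of_tendsto t₁ t₂ (eventually_atTop.2 ⟨1, bound⟩)
  have hΓ₂ : 0 < ‖Complex.Gamma s₂‖ :=
    norm_pos_iff.mpr (Complex.Gamma_ne_zero_of_re_pos (by rw [hre₂]; exact hx))
  calc ‖Complex.Gamma s₁‖ ≤ r * ‖Complex.Gamma s₂‖ := hle
    _ < 1 * ‖Complex.Gamma s₂‖ := by
        exact mul_lt_mul_of_pos_right hr1 hΓ₂
    _ = ‖Complex.Gamma s₂‖ := one_mul _

private lemma integral_comp_abs_c (f : ℝ → ℂ) :
    ∫ x : ℝ, f |x| = 2 * ∫ x in Ioi (0 : ℝ), f x := by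
  have eq : ∫ (x : ℝ) in Ioi 0, f |x| = ∫ (x : ℝ) in Ioi 0, f x := by
    refine setIntegral_congr_fun measurableSet_Ioi (fun _ hx => ?_)
    rw [abs_eq_self.mpr (le_of_lt (by exact hx))]
  by_cases hf : IntegrableOn (fun x => f |x|) (Ioi 0)
  · have int_Iic : IntegrableOn (fun x ↦ f |x|) (Iic 0) := by
      rw [← Measure.map_neg_eq_self (volume : Measure ℝ)]
      let m : MeasurableEmbedding fun x : ℝ => -x := (Homeomorph.neg ℝ).measurableEmbedding
      rw [m.integrableOn_map_iff]
      simp_rw [Function.comp_def, abs_neg, neg_preimage, neg_Iic, neg_zero]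
      exact Iff.mpr integrableOn_Ici_iff_integrableOn_Ioi hf
    calc
      _ = (∫ x in Iic 0, f |x|) + ∫ x in Ioi 0, f |x| := by
        rw [← setIntegral_union (Iic_disjoint_Ioi le_rfl) measurableSet_Ioi int_Iic hf,
          Iic_union_Ioi, Measure.restrict_univ]
      _ = 2 * ∫ x in Ioi 0, f x := by
        rw [two_mul, eq]
        congr! 1
        rw [← neg_zero, ← integral_comp_neg_Iic, neg_zero]
        refine setIntegral_congr_fun measurableSet_Iic (fun _ hx => ?_)
        rw [abs_eq_neg_self.mpr (by exact hx)]
  · have : ¬ Integrable (fun x => f |x|) := by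
      contrapose! hf
      exact hf.integrableOn
    rw [← eq, integral_undef hf, integral_undef this, mul_zero]

private lemma bfCoeff_eq (c σ : ℝ) (hc : 0 < c) (hσ : 0 < σ) (hβ : 0 < ggdBeta c σ) (n : ℕ) :
    bfCoeff c σ n = 2 * (ggdA c σ : ℂ) *
      ((ggdBeta c σ : ℂ) ^ (-(1 - ((2 * π * n / Real.log 10 : ℝ) : ℂ) * Complex.I)) *
        ((|c|⁻¹ : ℝ) • Complex.Gamma ((1 - ((2 * π * n / Real.log 10 : ℝ) : ℂ) * Complex.I) / c))) := by
  set β := ggdBeta c σ with hβdef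
  set A := ggdA c σ with hAdef
  set t : ℝ := 2 * π * n / Real.log 10 with ht
  set s : ℂ := 1 - (t : ℂ) * Complex.I with hs
  set F : ℝ → ℂ := fun x => (ggdPdf c σ x : ℂ) *
    Complex.exp (-((2 * π * n * Real.logb 10 |x| : ℝ) : ℂ) * Complex.I) with hF
  have hFeven : ∀ x : ℝ, F |x| = F x := by
    intro x
    simp only [hF, ggdPdf, abs_abs, abs_mul]
  have step1 : bfCoeff c σ n = 2 * ∫ x in Ioi (0 : ℝ), F x := by
    rw [bfCoeff, ← integral_comp_abs_c F]
    exact integral_congr_ae (Filter.Eventually.of_forall fun x => (hFeven x).symm)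
  have step2 : ∫ x in Ioi (0 : ℝ), F x
      = (A : ℂ) * mellin (fun y : ℝ => ((Real.exp (-((β * y) ^ c)) : ℝ) : ℂ)) s := by
    rw [mellin, ← integral_const_mul]
    refine setIntegral_congr_fun measurableSet_Ioi (fun y hy => ?_)
    have hy' : (0:ℝ) < y := hy
    have h1 : |β * y| = β * y := abs_of_pos (mul_pos hβ hy')
    have h2 : (2 * π * n * Real.logb 10 |y| : ℝ) = t * Real.log y := by
      rw [abs_of_pos hy', Real.logb, ht]
      ring
    have h3 : (y : ℂ) ^ (s - 1) = Complex.exp (-((t * Real.log y : ℝ) : ℂ) * Complex.I) := by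
      rw [Complex.cpow_def_of_ne_zero (by exact_mod_cast hy'.ne' : (y:ℂ) ≠ 0),
        ← Complex.ofReal_log hy'.le]
      congr 1
      rw [hs]
      push_cast
      ring
    simp only [hF, ggdPdf, smul_eq_mul, ← hAdef, ← hβdef, h1, h2, h3]
    push_cast
    ring
  have step3 : mellin (fun y : ℝ => ((Real.exp (-((β * y) ^ c)) : ℝ) : ℂ)) s
      = (β : ℂ) ^ (-s) • mellin (fun y : ℝ => ((Real.exp (-(y ^ c)) : ℝ) : ℂ)) s :=
    mellin_comp_mul_left (fun u : ℝ => ((Real.exp (-(u ^ c)) : ℝ) : ℂ)) s hβ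
  have step4 : mellin (fun y : ℝ => ((Real.exp (-(y ^ c)) : ℝ) : ℂ)) s
      = (|c|⁻¹ : ℝ) • mellin (fun y : ℝ => ((Real.exp (-y) : ℝ) : ℂ)) (s / c) :=
    mellin_comp_rpow (fun u : ℝ => ((Real.exp (-u) : ℝ) : ℂ)) s c
  have hre : (s / (c : ℂ)).re = 1 / c := by
    rw [Complex.div_ofReal_re, hs]
    simp
  have step5 : mellin (fun y : ℝ => ((Real.exp (-y) : ℝ) : ℂ)) (s / c)
      = Complex.Gamma (s / c) := by
    rw [Complex.Gamma_eq_integral (by rw [hre]; positivity), Complex.GammaIntegral, mellin]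
    refine setIntegral_congr_fun measurableSet_Ioi (fun y hy => ?_)
    rw [smul_eq_mul, mul_comm]
  rw [step1, step2, step3, step4, step5, smul_eq_mul]
  push_cast
  ring_nf

private lemma abs_bfCoeff (c σ : ℝ) (hc : 0 < c) (hσ : 0 < σ) (hβ : 0 < ggdBeta c σ) (n : ℕ) :
    ‖bfCoeff c σ n‖ =
      (2 * ggdA c σ * (ggdBeta c σ)⁻¹ * c⁻¹) *
        ‖Complex.Gamma (((1 / c : ℝ) : ℂ) +
          ((2 * π * n / (Real.log 10 * c) : ℝ) : ℂ) * Complex.I)‖ := by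
  set β := ggdBeta c σ with hβdef
  set A := ggdA c σ with hAdef
  set t : ℝ := 2 * π * n / Real.log 10 with ht
  set s : ℂ := 1 - (t : ℂ) * Complex.I with hs
  have hA : 0 ≤ A := by
    rw [hAdef, ggdA]
    have := Real.Gamma_pos_of_pos (show (0:ℝ) < 1 / c by positivity)
    rw [← hβdef]
    positivity
  have hcne : (c : ℂ) ≠ 0 := by exact_mod_cast hc.ne'
  have hsre : (-s).re = -1 := by rw [hs]; simp
  have hΓeq : ‖Complex.Gamma (s / (c : ℂ))‖
      = ‖Complex.Gamma (((1 / c : ℝ) : ℂ) +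
          ((2 * π * n / (Real.log 10 * c) : ℝ) : ℂ) * Complex.I)‖ := by
    have h1 : s / (c : ℂ) = (starRingEnd ℂ) (((1 / c : ℝ) : ℂ) +
        ((2 * π * n / (Real.log 10 * c) : ℝ) : ℂ) * Complex.I) := by
      have hconj : (starRingEnd ℂ) (((1 / c : ℝ) : ℂ) +
          ((2 * π * n / (Real.log 10 * c) : ℝ) : ℂ) * Complex.I)
          = ((1 / c : ℝ) : ℂ) - ((2 * π * n / (Real.log 10 * c) : ℝ) : ℂ) * Complex.I := by
        rw [map_add, map_mul, Complex.conj_ofReal, Complex.conj_ofReal, Complex.conj_I]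
        ring
      have hlog : Real.log 10 ≠ 0 := by
        have : (0:ℝ) < Real.log 10 := Real.log_pos (by norm_num)
        exact this.ne'
      rw [hconj, hs, ht, div_eq_iff hcne]
      push_cast
      field_simp
    rw [h1, Complex.Gamma_conj, Complex.norm_conj]
  rw [bfCoeff_eq c σ hc hσ hβ n, ← ht, ← hs]
  rw [Complex.real_smul]
  rw [norm_mul, norm_mul, norm_mul, norm_mul]
  rw [Complex.norm_cpow_eq_rpow_re_of_pos hβ, hsre, Real.rpow_neg_one]
  simp only [Complex.norm_real, Real.norm_eq_abs, Complex.norm_two, abs_of_nonneg hA,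
    abs_of_pos hβ, hΓeq]
  rw [abs_of_pos (show (0:ℝ) < |c|⁻¹ by positivity), abs_of_pos hc, abs_of_nonneg (hA : 0 ≤ ggdA c σ)]
  ring

/-- The moduli of the Benford–Fourier coefficients are strictly decreasing in `n`. -/
theorem bfCoeff_abs_strictAnti (c σ : ℝ) (hc : 0 < c) (hσ : 0 < σ) (n : ℕ) (hn : 0 < n) :
    ‖bfCoeff c σ (n + 1)‖ < ‖bfCoeff c σ n‖ := by
  have hΓ1 : 0 < Real.Gamma (1 / c) := Real.Gamma_pos_of_pos (by positivity)
  have hΓ3 : 0 < Real.Gamma (3 / c) := Real.Gamma_pos_of_pos (by positivity)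
  have hβ : 0 < ggdBeta c σ := by
    rw [ggdBeta]
    have : 0 < Real.sqrt (Real.Gamma (3 / c) / Real.Gamma (1 / c)) :=
      Real.sqrt_pos.mpr (div_pos hΓ3 hΓ1)
    positivity
  have hA : 0 < ggdA c σ := by
    rw [ggdA]
    positivity
  have hlog : 0 < Real.log 10 := Real.log_pos (by norm_num)
  rw [abs_bfCoeff c σ hc hσ hβ n, abs_bfCoeff c σ hc hσ hβ (n + 1)]
  have hK : 0 < 2 * ggdA c σ * (ggdBeta c σ)⁻¹ * c⁻¹ := by positivity
  apply mul_lt_mul_of_pos_left _ hK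
  apply gamma_abs_lt (by positivity)
  · have hn' : (0:ℝ) < (n : ℝ) := by exact_mod_cast hn
    positivity
  · have h1 : (0:ℝ) < Real.log 10 * c := by positivity
    rw [div_lt_div_iff₀ h1 h1]
    push_cast
    nlinarith [Real.pi_pos]
end

section
/- For every c > 0, σ > 0 and every positive integer n, the modulus of the n-th Benford–Fourier coefficient satisfies 0 < |a_n| ≤ (1 + (2πn/ln 10)²)^{−1/2} < 1. -/
open Real MeasureTheory

open Set

lemma integral_comp_abs_complex (f : ℝ → ℂ) :
    ∫ x, f |x| = 2 * ∫ x in Ioi (0 : ℝ), f x := by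
  have eq : ∫ (x : ℝ) in Ioi 0, f |x| = ∫ (x : ℝ) in Ioi 0, f x := by
    refine setIntegral_congr_fun measurableSet_Ioi (fun _ hx => ?_)
    rw [abs_eq_self.mpr (le_of_lt (by exact hx))]
  by_cases hf : IntegrableOn (fun x => f |x|) (Ioi 0)
  · have int_Iic : IntegrableOn (fun x ↦ f |x|) (Iic 0) := by
      rw [← Measure.map_neg_eq_self (volume : Measure ℝ)]
      let m : MeasurableEmbedding fun x : ℝ => -x := (Homeomorph.neg ℝ).measurableEmbedding
      rw [m.integrableOn_map_iff]
      simp_rw [Function.comp_def, abs_neg, neg_preimage, neg_Iic, neg_zero]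
      exact Iff.mpr integrableOn_Ici_iff_integrableOn_Ioi hf
    calc
      _ = (∫ x in Iic 0, f |x|) + ∫ x in Ioi 0, f |x| := by
        rw [← setIntegral_union (Iic_disjoint_Ioi le_rfl) measurableSet_Ioi int_Iic hf,
          Iic_union_Ioi, Measure.restrict_univ]
      _ = 2 * ∫ x in Ioi 0, f x := by
        rw [two_mul, eq]
        congr! 1
        rw [← neg_zero, ← integral_comp_neg_Iic, neg_zero]
        refine setIntegral_congr_fun measurableSet_Iic (fun _ hx => ?_)
        rw [abs_eq_neg_self.mpr (by exact hx)]
  · have h2 : ¬ Integrable (fun x => f |x|) := by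
      contrapose! hf
      exact hf.integrableOn
    rw [← eq, integral_undef hf, integral_undef h2, mul_zero]

lemma abs_Gamma_le_re {s : ℂ} (hs : 0 < s.re) :
    ‖Complex.Gamma s‖ ≤ Real.Gamma s.re := by
  rw [Complex.Gamma_eq_integral hs, Complex.GammaIntegral, Real.Gamma_eq_integral hs]
  refine (norm_integral_le_integral_norm _).trans_eq ?_
  refine setIntegral_congr_fun measurableSet_Ioi fun x hx => ?_
  rw [norm_mul, Complex.norm_real, Real.norm_of_nonneg (Real.exp_pos _).le,
    Complex.norm_cpow_eq_rpow_re_of_pos hx]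
  simp [Complex.sub_re]

lemma abs_Gamma_bound {s : ℂ} (hs : 0 < s.re) :
    ‖Complex.Gamma s‖ * Real.sqrt (s.re ^ 2 + s.im ^ 2) ≤ s.re * Real.Gamma s.re := by
  have hs0 : s ≠ 0 := fun h => by simp [h] at hs
  have h1 : Complex.Gamma (s + 1) = s * Complex.Gamma s := Complex.Gamma_add_one s hs0
  have habs : ‖s‖ = Real.sqrt (s.re ^ 2 + s.im ^ 2) := by
    rw [Complex.norm_def, Complex.normSq_apply]; ring_nf
  calc ‖Complex.Gamma s‖ * Real.sqrt (s.re ^ 2 + s.im ^ 2)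
      = ‖Complex.Gamma (s + 1)‖ := by
        rw [h1, norm_mul, habs]; ring
    _ ≤ Real.Gamma ((s + 1).re) := abs_Gamma_le_re (by simp [Complex.add_re]; linarith)
    _ = s.re * Real.Gamma s.re := by
        simp only [Complex.add_re, Complex.one_re]
        exact Real.Gamma_add_one hs.ne'

lemma integral_exp_mul_cpow {p : ℝ} (hp : 0 < p) {q : ℂ} (hq : -1 < q.re) :
    ∫ x in Ioi (0 : ℝ), (Real.exp (-x ^ p) : ℂ) * (x : ℂ) ^ q =
      (1 / (p : ℂ)) * Complex.Gamma ((q + 1) / p) := by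
  have hre : 0 < ((q + 1) / (p : ℂ)).re := by
    rw [Complex.div_ofReal_re]
    exact div_pos (by simpa using by linarith [hq]) hp
  have key : Complex.Gamma ((q + 1) / p) =
      (p : ℂ) * ∫ x in Ioi (0 : ℝ), (Real.exp (-x ^ p) : ℂ) * (x : ℂ) ^ q := by
    rw [← integral_const_mul, Complex.Gamma_eq_integral hre, Complex.GammaIntegral,
      ← integral_comp_rpow_Ioi (fun x => (Real.exp (-x) : ℂ) * (x : ℂ) ^ ((q + 1) / p - 1)) hp.ne']
    refine setIntegral_congr_fun measurableSet_Ioi fun x hx => ?_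
    have hx0 : (x : ℂ) ≠ 0 := Complex.ofReal_ne_zero.mpr (ne_of_gt hx)
    have hpc : (p : ℂ) ≠ 0 := Complex.ofReal_ne_zero.mpr hp.ne'
    rw [← Complex.cpow_mul_ofReal_nonneg hx.le, Complex.real_smul, abs_of_pos hp,
      Complex.ofReal_mul, Complex.ofReal_cpow hx.le]
    have h2 : (p : ℂ) * ((q + 1) / (p : ℂ) - 1) = q + 1 - p := by
      field_simp
    have h3 : (x : ℂ) ^ (q + 1 - (p:ℂ)) = (x:ℂ) ^ q * (x:ℂ) ^ ((1:ℂ) - p) := by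
      rw [← Complex.cpow_add _ _ hx0]; ring_nf
    have h4 : ((x:ℂ)^((p:ℂ)-1)) * ((x:ℂ)^((1:ℂ)-(p:ℂ))) = 1 := by
      rw [← Complex.cpow_add _ _ hx0]; norm_num
    rw [h2, h3]
    push_cast
    calc (p:ℂ) * (x:ℂ) ^ ((p:ℂ) - 1) * (Complex.exp (-((x ^ p : ℝ):ℂ)) * ((x:ℂ) ^ q * (x:ℂ) ^ (1 - (p:ℂ))))
        = ((x:ℂ) ^ ((p:ℂ) - 1) * (x:ℂ) ^ (1 - (p:ℂ))) * ((p:ℂ) * (Complex.exp (-((x ^ p : ℝ):ℂ)) * (x:ℂ) ^ q)) := by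
          ring
      _ = (p:ℂ) * (Complex.exp (-((x ^ p : ℝ):ℂ)) * (x:ℂ) ^ q) := by rw [h4]; ring
  rw [key]
  have hpc : (p : ℂ) ≠ 0 := Complex.ofReal_ne_zero.mpr hp.ne'
  field_simp

lemma bf_integral_eq (c σ : ℝ) (hc : 0 < c) (hσ : 0 < σ) (τ : ℝ) :
    ∫ x : ℝ, (ggdPdf c σ x : ℂ) * Complex.exp (-((τ * Real.log |x| : ℝ) : ℂ) * Complex.I)
      = (ggdBeta c σ : ℂ) ^ ((τ : ℂ) * Complex.I) *
        Complex.Gamma ((1 - (τ : ℂ) * Complex.I) / c) / (Real.Gamma (1 / c) : ℂ) := by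
  have hΓc : 0 < Real.Gamma (1 / c) := Real.Gamma_pos_of_pos (by positivity)
  have hΓ3 : 0 < Real.Gamma (3 / c) := Real.Gamma_pos_of_pos (by positivity)
  set β := ggdBeta c σ with hβdef
  have hβ : 0 < β := by
    rw [hβdef, ggdBeta]
    exact mul_pos (by positivity) (Real.sqrt_pos.mpr (div_pos hΓ3 hΓc))
  set A := ggdA c σ with hAdef
  set F : ℝ → ℂ := fun x => (A : ℂ) * (Real.exp (-(β * x) ^ c) : ℂ) *
    Complex.exp (-((τ * Real.log x : ℝ) : ℂ) * Complex.I) with hF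
  set G : ℝ → ℂ := fun u => (A : ℂ) * (Real.exp (-u ^ c) : ℂ) *
    Complex.exp (-((τ * (Real.log u - Real.log β) : ℝ) : ℂ) * Complex.I) with hG
  have step1 : (fun x : ℝ => (ggdPdf c σ x : ℂ) *
      Complex.exp (-((τ * Real.log |x| : ℝ) : ℂ) * Complex.I)) = fun x => F |x| := by
    funext x
    simp only [hF, ggdPdf, ← hAdef, ← hβdef]
    rw [abs_mul, abs_of_pos hβ]
    push_cast
    ring
  rw [step1, integral_comp_abs_complex]
  have step3 : ∫ x in Ioi (0 : ℝ), F x = ∫ x in Ioi (0 : ℝ), G (β * x) := by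
    refine setIntegral_congr_fun measurableSet_Ioi fun x hx => ?_
    simp only [hF, hG]
    rw [Real.log_mul hβ.ne' (ne_of_gt hx)]
    ring_nf
  rw [step3, integral_comp_mul_left_Ioi G 0 hβ, mul_zero]
  have step5 : ∫ u in Ioi (0 : ℝ), G u =
      (A : ℂ) * Complex.exp (((τ * Real.log β : ℝ) : ℂ) * Complex.I) *
        ∫ u in Ioi (0 : ℝ), (Real.exp (-u ^ c) : ℂ) * (u : ℂ) ^ (-(τ : ℂ) * Complex.I) := by
    rw [← integral_const_mul]
    refine setIntegral_congr_fun measurableSet_Ioi fun u hu => ?_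
    have hu0 : (u : ℂ) ≠ 0 := Complex.ofReal_ne_zero.mpr (ne_of_gt hu)
    simp only [hG]
    rw [Complex.cpow_def_of_ne_zero hu0, ← Complex.ofReal_log hu.le]
    have hee : Complex.exp (((τ * Real.log β : ℝ) : ℂ) * Complex.I) *
        Complex.exp ((Real.log u : ℂ) * (-(τ:ℂ) * Complex.I)) =
        Complex.exp (-((τ * (Real.log u - Real.log β) : ℝ) : ℂ) * Complex.I) := by
      rw [← Complex.exp_add]
      congr 1
      push_cast
      ring
    rw [← hee]
    ring
  rw [step5, integral_exp_mul_cpow hc (by simp)]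
  have hτI : -(τ : ℂ) * Complex.I + 1 = 1 - (τ : ℂ) * Complex.I := by ring
  rw [hτI]
  have hexp : Complex.exp (((τ * Real.log β : ℝ) : ℂ) * Complex.I) =
      (β : ℂ) ^ ((τ : ℂ) * Complex.I) := by
    rw [Complex.cpow_def_of_ne_zero (Complex.ofReal_ne_zero.mpr hβ.ne'),
      ← Complex.ofReal_log hβ.le]
    congr 1
    push_cast
    ring
  have hsc : (2 : ℂ) * (β : ℂ)⁻¹ * (A : ℂ) * (1 / (c : ℂ)) = 1 / (Real.Gamma (1 / c) : ℂ) := by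
    have hr : (2 : ℝ) * β⁻¹ * A * (1 / c) = 1 / Real.Gamma (1 / c) := by
      rw [hAdef, ggdA, ← hβdef]
      field_simp
    calc (2 : ℂ) * (β : ℂ)⁻¹ * (A : ℂ) * (1 / (c : ℂ))
        = ((2 * β⁻¹ * A * (1 / c) : ℝ) : ℂ) := by push_cast; ring
      _ = _ := by rw [hr]; push_cast; ring
  rw [hexp, Complex.real_smul]
  push_cast
  calc 2 * ((β : ℂ)⁻¹ * ((A:ℂ) * (β : ℂ) ^ ((τ : ℂ) * Complex.I) *
        (1 / (c:ℂ) * Complex.Gamma ((1 - (τ:ℂ) * Complex.I) / (c:ℂ)))))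
      = ((2:ℂ) * (β : ℂ)⁻¹ * (A:ℂ) * (1 / (c:ℂ))) * ((β : ℂ) ^ ((τ : ℂ) * Complex.I) *
          Complex.Gamma ((1 - (τ:ℂ) * Complex.I) / (c:ℂ))) := by ring
    _ = _ := by rw [hsc]; ring

/-- Bounds on the modulus of the `n`-th Benford–Fourier coefficient:
`0 < |a_n| ≤ (1 + (2πn/ln 10)²)^{−1/2} < 1`. -/
theorem bfCoeff_abs_bounds (c σ : ℝ) (hc : 0 < c) (hσ : 0 < σ) (n : ℕ) (hn : 0 < n) :
    0 < ‖bfCoeff c σ n‖ ∧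
    ‖bfCoeff c σ n‖ ≤ Real.sqrt ((1 + (2 * π * n / Real.log 10) ^ 2)⁻¹) ∧
    Real.sqrt ((1 + (2 * π * n / Real.log 10) ^ 2)⁻¹) < 1 := by
  have hlog10 : 0 < Real.log 10 := Real.log_pos (by norm_num)
  have hn' : (0 : ℝ) < n := Nat.cast_pos.mpr hn
  set τ : ℝ := 2 * π * n / Real.log 10 with hτdef
  have hτ : 0 < τ := div_pos (by positivity) hlog10
  have hΓc : 0 < Real.Gamma (1 / c) := Real.Gamma_pos_of_pos (by positivity)
  have hΓ3 : 0 < Real.Gamma (3 / c) := Real.Gamma_pos_of_pos (by positivity)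
  have hβ : 0 < ggdBeta c σ := by
    rw [ggdBeta]
    exact mul_pos (by positivity) (Real.sqrt_pos.mpr (div_pos hΓ3 hΓc))
  set s : ℂ := (1 - (τ : ℂ) * Complex.I) / c with hsdef
  have hsre : s.re = 1 / c := by
    rw [hsdef, Complex.div_ofReal_re]
    simp [Complex.sub_re]
  have hsim : s.im = -(τ / c) := by
    rw [hsdef, Complex.div_ofReal_im]
    simp [Complex.sub_im]
    ring
  have hsre' : 0 < s.re := by rw [hsre]; positivity
  -- value of the coefficient
  have hval : bfCoeff c σ n = (ggdBeta c σ : ℂ) ^ ((τ : ℂ) * Complex.I) *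
      Complex.Gamma s / (Real.Gamma (1 / c) : ℂ) := by
    rw [bfCoeff, ← bf_integral_eq c σ hc hσ τ]
    congr 1
    funext x
    congr 3
    rw [Real.logb, hτdef]
    push_cast
    ring
  have habs : ‖bfCoeff c σ n‖ =
      ‖Complex.Gamma s‖ / Real.Gamma (1 / c) := by
    rw [hval, norm_div, norm_mul, Complex.norm_cpow_eq_rpow_re_of_pos hβ, Complex.norm_real,
      Real.norm_of_nonneg hΓc.le]
    simp [Complex.mul_re]
  have hΓs : Complex.Gamma s ≠ 0 := Complex.Gamma_ne_zero_of_re_pos hsre'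
  have hsq : 0 < Real.sqrt (1 + τ ^ 2) := Real.sqrt_pos.mpr (by positivity)
  have hone : 1 < Real.sqrt (1 + τ ^ 2) := by
    have h1 : Real.sqrt 1 < Real.sqrt (1 + τ ^ 2) := Real.sqrt_lt_sqrt (by norm_num) (by nlinarith)
    simpa using h1
  refine ⟨?_, ?_, ?_⟩
  · rw [habs]
    exact div_pos (norm_pos_iff.mpr hΓs) hΓc
  · have key := abs_Gamma_bound hsre'
    have h6 : Real.sqrt (s.re ^ 2 + s.im ^ 2) = Real.sqrt (1 + τ ^ 2) / c := by
      rw [hsre, hsim, show (1/c)^2 + (-(τ/c))^2 = (1 + τ^2)/c^2 by ring,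
        Real.sqrt_div (by positivity), Real.sqrt_sq hc.le]
    rw [h6, hsre] at key
    have hgle : ‖Complex.Gamma s‖ ≤ Real.Gamma (1/c) / Real.sqrt (1 + τ ^ 2) := by
      calc ‖Complex.Gamma s‖
          = (‖Complex.Gamma s‖ * (Real.sqrt (1 + τ ^ 2) / c)) *
            (c / Real.sqrt (1 + τ ^ 2)) := by field_simp
        _ ≤ (1/c * Real.Gamma (1/c)) * (c / Real.sqrt (1 + τ ^ 2)) := by
            exact mul_le_mul_of_nonneg_right key (by positivity)
        _ = Real.Gamma (1/c) / Real.sqrt (1 + τ ^ 2) := by field_simp; try ring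
    rw [habs, Real.sqrt_inv]
    calc ‖Complex.Gamma s‖ / Real.Gamma (1/c)
        ≤ (Real.Gamma (1/c) / Real.sqrt (1 + τ ^ 2)) / Real.Gamma (1/c) := by gcongr
      _ = (Real.sqrt (1 + τ ^ 2))⁻¹ := by field_simp; try ring
  · rw [Real.sqrt_inv]
    exact inv_lt_one_of_one_lt₀ hone
end

section
/- For every real x > 0 and every real y, the infinite product ∏_{k=0}^{∞} (1 + y²/(x+k)²)^{−1} converges and the modulus of the Gamma function at a complex argument satisfies |Γ_ℂ(x + i·y)|² = Γ(x)² · ∏_{k=0}^{∞} (1 + y²/(x+k)²)^{−1}. -/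
open Real

/-- Euler-type product formula for the modulus of the Gamma function at a
complex argument: `|Γ(x + iy)|² = Γ(x)² · ∏_{k=0}^{∞} (1 + y²/(x+k)²)⁻¹`. -/
theorem complexGamma_abs_sq_eq_tprod (x : ℝ) (hx : 0 < x) (y : ℝ) :
    Multipliable (fun k : ℕ => (1 + y ^ 2 / (x + k) ^ 2)⁻¹) ∧
    ‖Complex.Gamma ((x : ℂ) + (y : ℂ) * Complex.I)‖ ^ 2 =
      Real.Gamma x ^ 2 * ∏' k : ℕ, (1 + y ^ 2 / (x + k) ^ 2)⁻¹ := by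
  set z : ℂ := (x : ℂ) + (y : ℂ) * Complex.I with hz
  set a : ℕ → ℝ := fun k => (1 + y ^ 2 / (x + k) ^ 2)⁻¹ with ha
  have hax : ∀ k : ℕ, 0 < x + k := fun k => by positivity
  have htnn : ∀ k : ℕ, 0 ≤ y ^ 2 / (x + k) ^ 2 := fun k => by positivity
  have hapos : ∀ k, 0 < a k := fun k => by
    have := htnn k
    simp only [ha]
    positivity
  -- summability of the dominating series
  have hc : 0 < min x 1 := lt_min hx one_pos
  have hbase : Summable (fun k : ℕ => 1 / ((k : ℝ) + 1) ^ 2) := by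
    have h := (summable_nat_add_iff (f := fun n : ℕ => 1 / (n : ℝ) ^ 2) 1).mpr
      (Real.summable_one_div_nat_pow.mpr one_lt_two)
    refine h.congr fun n => by push_cast; ring
  have ht : Summable (fun k : ℕ => y ^ 2 / (x + k) ^ 2) := by
    refine Summable.of_nonneg_of_le htnn (fun k => ?_) (hbase.mul_left (y ^ 2 / (min x 1) ^ 2))
    have h1 : min x 1 * ((k : ℝ) + 1) ≤ x + k := by
      have h2 : min x 1 ≤ x := min_le_left _ _
      have h3 : min x 1 ≤ 1 := min_le_right _ _
      nlinarith [Nat.cast_nonneg (α := ℝ) k]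
    have h4 : (min x 1) ^ 2 * ((k : ℝ) + 1) ^ 2 ≤ (x + k) ^ 2 := by
      rw [← mul_pow]
      exact pow_le_pow_left₀ (by positivity) h1 2
    rw [div_mul_div_comm, mul_one]
    exact div_le_div_of_nonneg_left (sq_nonneg y) (by positivity) h4
  -- summability of the logs
  have hlog : Summable (fun k : ℕ => Real.log (a k)) := by
    refine Summable.of_abs (Summable.of_nonneg_of_le (fun k => abs_nonneg _) (fun k => ?_) ht)
    have h1 : (0:ℝ) < 1 + y ^ 2 / (x + k) ^ 2 := by have := htnn k; linarith
    rw [ha]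
    simp only [Real.log_inv, abs_neg]
    rw [abs_of_nonneg (Real.log_nonneg (by linarith [htnn k]))]
    have := Real.log_le_sub_one_of_pos h1
    linarith
  -- multipliability
  have hmul : Multipliable a := by
    have := Real.multipliable_of_summable_log (f := a) hapos hlog
    exact this
  refine ⟨hmul, ?_⟩
  -- the key identity for partial products
  have habsj : ∀ j : ℕ, ‖z + j‖ ^ 2 = (x + j) ^ 2 + y ^ 2 := by
    intro j
    have : z + j = ((x + j : ℝ) : ℂ) + (y : ℝ) * Complex.I := by
      rw [hz]; push_cast; ring
    rw [this, Complex.sq_norm, Complex.normSq_add_mul_I]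
  have key : ∀ n : ℕ, ‖Complex.GammaSeq z n‖ ^ 2 =
      Real.GammaSeq x n ^ 2 * ∏ j ∈ Finset.range (n + 1), a j := by
    intro n
    have h1 : ‖(n : ℂ) ^ z‖ = (n : ℝ) ^ x := by
      have hre : z.re = x := by simp [hz]
      rw [show ((n : ℂ)) = (((n : ℝ) : ℂ)) by norm_num]
      rw [Complex.norm_cpow_eq_rpow_re_of_nonneg (Nat.cast_nonneg n)
        (by rw [hre]; exact hx.ne'), hre]
    have hprod : (∏ j ∈ Finset.range (n + 1), ‖z + j‖) ^ 2 *
        ∏ j ∈ Finset.range (n + 1), a j = (∏ j ∈ Finset.range (n + 1), (x + j)) ^ 2 := by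
      rw [← Finset.prod_pow, ← Finset.prod_mul_distrib, ← Finset.prod_pow]
      refine Finset.prod_congr rfl fun j _ => ?_
      rw [habsj j, ha]
      have h2 := (hax j).ne'
      field_simp
    have hPa : (0:ℝ) < ∏ j ∈ Finset.range (n + 1), a j :=
      Finset.prod_pos fun j _ => hapos j
    have habsne : (∏ j ∈ Finset.range (n + 1), ‖z + j‖) ^ 2 ≠ 0 := by
      refine pow_ne_zero _ (Finset.prod_ne_zero_iff.mpr fun j _ => ?_)
      have : ‖z + j‖ ^ 2 = (x + j) ^ 2 + y ^ 2 := habsj j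
      intro h
      rw [h] at this
      nlinarith [hax j, sq_nonneg y]
    rw [Complex.GammaSeq, Real.GammaSeq]
    rw [norm_div, norm_mul, h1, Complex.norm_natCast, norm_prod]
    rw [div_pow, div_pow, mul_pow, ← hprod]
    field_simp
  -- limits
  have hP : Filter.Tendsto (fun n : ℕ => ∏ j ∈ Finset.range n, a j) Filter.atTop
      (nhds (∏' k, a k)) := hmul.hasProd.tendsto_prod_nat
  have hPs : Filter.Tendsto (fun n : ℕ => ∏ j ∈ Finset.range (n + 1), a j) Filter.atTop
      (nhds (∏' k, a k)) := hP.comp (Filter.tendsto_add_atTop_nat 1)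
  have hL : Filter.Tendsto (fun n : ℕ => ‖Complex.GammaSeq z n‖ ^ 2) Filter.atTop
      (nhds (‖Complex.Gamma z‖ ^ 2)) :=
    ((continuous_norm.tendsto _).comp (Complex.GammaSeq_tendsto_Gamma z)).pow 2
  have hR : Filter.Tendsto (fun n : ℕ => Real.GammaSeq x n ^ 2 *
      ∏ j ∈ Finset.range (n + 1), a j) Filter.atTop
      (nhds (Real.Gamma x ^ 2 * ∏' k, a k)) :=
    ((Real.GammaSeq_tendsto_Gamma x).pow 2).mul hPs
  exact tendsto_nhds_unique (hL.congr fun n => key n) hR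
end
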